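/- arXiv:1702.04071 — 2 statements merged into one kernel-verified Lean document; each statement's English description precedes it below -/
import Mathlib

section
/- The quotient algebra B(Z_2) is 32-dimensional over F_2. More precisely, a basis is given by the 4 idempotents i_0, i_1, i_2, i_3 together with the 28 elements ρ_{[i,j]} = ρ_i ρ_{i+1} ··· ρ_j for 1 ≤ i ≤ j ≤ 7. -/
open FreeAlgebra

/-- Generators of the path algebra `B(Z_2)`: four vertex idempotents and seven arrows. -/
inductive Gen2 : Type
  | e : Fin 4 → Gen2
  | r : Fin 7 → Gen2

/-- Sources of the arrows ρ₁,…,ρ₇. -/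
def src2 : Fin 7 → Fin 4 := ![0, 1, 0, 1, 2, 3, 2]

/-- Targets of the arrows ρ₁,…,ρ₇. -/
def tgt2 : Fin 7 → Fin 4 := ![1, 0, 1, 2, 3, 2, 3]

/-- Relations presenting `B(Z_2)` as a quotient of the free algebra: the path-algebra
relations for the quiver together with ρ₁ρ₄ = ρ₄ρ₇ = ρ₂ρ₁ = ρ₃ρ₂ = ρ₆ρ₅ = ρ₇ρ₆ = 0. -/
inductive Rel2 : FreeAlgebra (ZMod 2) Gen2 → FreeAlgebra (ZMod 2) Gen2 → Prop
  | idem (k : Fin 4) :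
      Rel2 (ι (ZMod 2) (Gen2.e k) * ι (ZMod 2) (Gen2.e k)) (ι (ZMod 2) (Gen2.e k))
  | orth (k l : Fin 4) (h : k ≠ l) : Rel2 (ι (ZMod 2) (Gen2.e k) * ι (ZMod 2) (Gen2.e l)) 0
  | sum : Rel2 (∑ k : Fin 4, ι (ZMod 2) (Gen2.e k)) 1
  | source (m : Fin 7) :
      Rel2 (ι (ZMod 2) (Gen2.e (src2 m)) * ι (ZMod 2) (Gen2.r m)) (ι (ZMod 2) (Gen2.r m))
  | target (m : Fin 7) :
      Rel2 (ι (ZMod 2) (Gen2.r m) * ι (ZMod 2) (Gen2.e (tgt2 m))) (ι (ZMod 2) (Gen2.r m))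
  | rel14 : Rel2 (ι (ZMod 2) (Gen2.r 0) * ι (ZMod 2) (Gen2.r 3)) 0
  | rel47 : Rel2 (ι (ZMod 2) (Gen2.r 3) * ι (ZMod 2) (Gen2.r 6)) 0
  | rel21 : Rel2 (ι (ZMod 2) (Gen2.r 1) * ι (ZMod 2) (Gen2.r 0)) 0
  | rel32 : Rel2 (ι (ZMod 2) (Gen2.r 2) * ι (ZMod 2) (Gen2.r 1)) 0
  | rel65 : Rel2 (ι (ZMod 2) (Gen2.r 5) * ι (ZMod 2) (Gen2.r 4)) 0
  | rel76 : Rel2 (ι (ZMod 2) (Gen2.r 6) * ι (ZMod 2) (Gen2.r 5)) 0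

/-- The genus-2 bordered algebra `B(Z_2)`. -/
abbrev B2 : Type := RingQuot Rel2

/-- The idempotents i₀, i₁, i₂, i₃ in `B(Z_2)`. -/
noncomputable def idem2 (k : Fin 4) : B2 :=
  RingQuot.mkAlgHom (ZMod 2) Rel2 (ι (ZMod 2) (Gen2.e k))

/-- The arrows ρ₁,…,ρ₇ in `B(Z_2)` (indexed by `Fin 7`). -/
noncomputable def arr2 (m : Fin 7) : B2 :=
  RingQuot.mkAlgHom (ZMod 2) Rel2 (ι (ZMod 2) (Gen2.r m))

/-- The arrow ρ_k in `B(Z_2)`, using 1-based indexing; `0` for out-of-range indices. -/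
noncomputable def ρ2 (k : ℕ) : B2 :=
  if h : 1 ≤ k ∧ k ≤ 7 then arr2 ⟨k - 1, by omega⟩ else 0

/-- The chord ρ_{[i,j]} = ρ_i ρ_{i+1} ⋯ ρ_j in `B(Z_2)` (1-based indices). -/
noncomputable def chord2 (i j : ℕ) : B2 :=
  ((List.range' i (j + 1 - i)).map ρ2).prod


/-- Index type for the chords rho_[i,j], 1 <= i <= j <= 7. -/
def ChordIdx2 : Type := {p : ℕ × ℕ // 1 ≤ p.1 ∧ p.1 ≤ p.2 ∧ p.2 ≤ 7}

----------------- model -----------------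

def srcN : ℕ → ℕ := fun m => [0,1,0,1,2,3,2].getD (m-1) 9
def tgtN : ℕ → ℕ := fun m => [1,0,1,2,3,2,3].getD (m-1) 9
def cI (t : ℕ) : ℕ := (t-4)/7+1
def cJ (t : ℕ) : ℕ := (t-4)%7+1
def validC (t : ℕ) : Prop := 4 ≤ t ∧ t < 53 ∧ cI t ≤ cJ t
instance : DecidablePred validC := fun t => by unfold validC; infer_instance
def validT (t : Fin 53) : Prop := t.1 < 4 ∨ validC t.1
instance : DecidablePred validT := fun t => by unfold validT; infer_instance
def startV (t : ℕ) : ℕ := if t < 4 then t else srcN (cI t)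
def endV (t : ℕ) : ℕ := if t < 4 then t else tgtN (cJ t)

/-- coercion of a natural number into `Fin 53` -/
def t! (n : ℕ) : Fin 53 := ⟨n % 53, Nat.mod_lt _ (by norm_num)⟩

def mulT (a b : Fin 53) : Option (Fin 53) :=
  if a.1 < 4 then
    if b.1 < 4 then (if a = b then some a else none)
    else (if a.1 = startV b.1 ∧ validC b.1 then some b else none)
  else
    if b.1 < 4 then (if endV a.1 = b.1 ∧ validC a.1 then some a else none)
    else
      if validC a.1 ∧ validC b.1 ∧ cI b.1 = cJ a.1 + 1 then
        some (t! (4+7*(cI a.1-1)+(cJ b.1-1))) else none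

def Vt : Type := {t : Fin 53 // validT t}
instance : Fintype Vt := Subtype.fintype _
instance : DecidableEq Vt := Subtype.instDecidableEq

set_option maxRecDepth 100000 in
set_option maxHeartbeats 1000000 in
theorem mulT_none : ∀ a b : Fin 53, ¬ validT a ∨ ¬ validT b → mulT a b = none := by decide

set_option maxRecDepth 100000 in
set_option maxHeartbeats 1000000 in
theorem mulT_valid' : ∀ a b : Fin 53, (mulT a b).all (fun c => decide (validT c)) = true := by
  decide

theorem mulT_valid {a b c : Fin 53} (h : mulT a b = some c) : validT c := by
  have := mulT_valid' a b
  rw [h] at this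
  simpa using this

set_option maxRecDepth 100000 in
set_option maxHeartbeats 4000000 in
theorem assocT : ∀ a b s : Vt,
    ((mulT b.1 s.1).bind (mulT a.1)) = ((mulT a.1 b.1).bind (fun c => mulT c s.1)) := by decide

/-- left-regular-representation matrix of a basis element -/
def L (a : Fin 53) : Matrix Vt Vt (ZMod 2) :=
  Matrix.of fun t s => if mulT a s.1 = some t.1 then 1 else 0

theorem assoc' (a b : Fin 53) (ha : validT a) (hb : validT b) (s : Fin 53) :
    ((mulT b s).bind (mulT a)) = ((mulT a b).bind (fun c => mulT c s)) := by
  by_cases hs : validT s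
  · exact assocT ⟨a, ha⟩ ⟨b, hb⟩ ⟨s, hs⟩
  · rw [mulT_none b s (Or.inr hs)]
    cases h2 : mulT a b with
    | none => rfl
    | some c => simp [mulT_none c s (Or.inr hs)]

theorem LmulL (a b : Fin 53) (ha : validT a) (hb : validT b) :
    L a * L b = (mulT a b).elim 0 L := by
  ext t s
  rw [Matrix.mul_apply]
  have hassoc := assoc' a b ha hb s.1
  cases h : mulT b s.1 with
  | none =>
    rw [h] at hassoc
    have hz : ∀ u : Vt, L a t u * L b u s = 0 := by
      intro u; simp [L, h]
    rw [Finset.sum_congr rfl fun u _ => hz u, Finset.sum_const, smul_zero]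
    cases h2 : mulT a b with
    | none => simp
    | some c =>
      rw [h2] at hassoc
      simp only [Option.bind_none, Option.bind_some] at hassoc
      simp [L, ← hassoc]
  | some u0 =>
    rw [h] at hassoc
    simp only [Option.bind_some] at hassoc
    have hu0 : validT u0 := mulT_valid h
    have hsum : (∑ u : Vt, L a t u * L b u s) = L a t ⟨u0, hu0⟩ * L b ⟨u0, hu0⟩ s :=
      Finset.sum_eq_single_of_mem _ (Finset.mem_univ _) (fun u _ hu => by
        have hne : ¬ (u0 = u.1) := fun he => hu (Subtype.ext he.symm)
        simp [L, h, hne])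
    rw [hsum, show L b ⟨u0, hu0⟩ s = 1 from if_pos h, mul_one]
    cases h2 : mulT a b with
    | none =>
      rw [h2] at hassoc
      simp only [Option.bind_none] at hassoc
      show (if mulT a u0 = some t.1 then (1 : ZMod 2) else 0) = 0
      simp [hassoc]
    | some c =>
      rw [h2] at hassoc
      simp only [Option.bind_some] at hassoc
      show (if mulT a u0 = some t.1 then (1 : ZMod 2) else 0) = (if mulT c s.1 = some t.1 then 1 else 0)
      rw [hassoc]

def F : Gen2 → Matrix Vt Vt (ZMod 2)
  | .e k => L (t! k.1)
  | .r m => L (t! (4+8*m.1))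

noncomputable def φ0 : FreeAlgebra (ZMod 2) Gen2 →ₐ[ZMod 2] Matrix Vt Vt (ZMod 2) :=
  FreeAlgebra.lift (ZMod 2) F

theorem hrel : ∀ ⦃x y⦄, Rel2 x y → φ0 x = φ0 y := by
  intro x y h
  induction h with
  | idem k =>
    fin_cases k <;>
    · simp only [φ0, map_mul, FreeAlgebra.lift_ι_apply, F]
      rw [LmulL _ _ (by decide) (by decide)]; rfl
  | orth k l hne =>
    fin_cases k <;> fin_cases l <;>
      first
      | exact absurd rfl hne
      | (simp only [φ0, map_mul, map_zero, FreeAlgebra.lift_ι_apply, F]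
         rw [LmulL _ _ (by decide) (by decide)]; rfl)
  | sum =>
    simp only [φ0, map_sum, map_one, FreeAlgebra.lift_ι_apply]
    rw [Fin.sum_univ_four]
    simp only [F]
    decide
  | source m =>
    fin_cases m <;>
    · simp only [φ0, map_mul, FreeAlgebra.lift_ι_apply, F]
      rw [LmulL _ _ (by decide) (by decide)]; rfl
  | target m =>
    fin_cases m <;>
    · simp only [φ0, map_mul, FreeAlgebra.lift_ι_apply, F]
      rw [LmulL _ _ (by decide) (by decide)]; rfl
  | rel14 =>
    simp only [φ0, map_mul, map_zero, FreeAlgebra.lift_ι_apply, F]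
    rw [LmulL _ _ (by decide) (by decide)]; rfl
  | rel47 =>
    simp only [φ0, map_mul, map_zero, FreeAlgebra.lift_ι_apply, F]
    rw [LmulL _ _ (by decide) (by decide)]; rfl
  | rel21 =>
    simp only [φ0, map_mul, map_zero, FreeAlgebra.lift_ι_apply, F]
    rw [LmulL _ _ (by decide) (by decide)]; rfl
  | rel32 =>
    simp only [φ0, map_mul, map_zero, FreeAlgebra.lift_ι_apply, F]
    rw [LmulL _ _ (by decide) (by decide)]; rfl
  | rel65 =>
    simp only [φ0, map_mul, map_zero, FreeAlgebra.lift_ι_apply, F]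
    rw [LmulL _ _ (by decide) (by decide)]; rfl
  | rel76 =>
    simp only [φ0, map_mul, map_zero, FreeAlgebra.lift_ι_apply, F]
    rw [LmulL _ _ (by decide) (by decide)]; rfl

noncomputable def φ : B2 →ₐ[ZMod 2] Matrix Vt Vt (ZMod 2) :=
  RingQuot.liftAlgHom (ZMod 2) ⟨φ0, hrel⟩

theorem φ_idem (k : Fin 4) : φ (idem2 k) = L (t! k.1) := by
  rw [idem2, φ, RingQuot.liftAlgHom_mkAlgHom_apply, φ0, FreeAlgebra.lift_ι_apply]; rfl

theorem φ_arr (m : Fin 7) : φ (arr2 m) = L (t! (4+8*m.1)) := by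
  rw [arr2, φ, RingQuot.liftAlgHom_mkAlgHom_apply, φ0, FreeAlgebra.lift_ι_apply]; rfl

theorem φ_ρ (k : ℕ) (h1 : 1 ≤ k) (h7 : k ≤ 7) : φ (ρ2 k) = L (t! (4+8*(k-1))) := by
  rw [ρ2, dif_pos ⟨h1, h7⟩, φ_arr]

set_option maxHeartbeats 1000000 in
theorem mulT_step : ∀ x y : Fin 7, x.1 ≤ y.1 → y.1+1 ≤ 6 →
    mulT (t! (4+7*x.1+y.1)) (t! (4+8*(y.1+1))) = some (t! (4+7*x.1+(y.1+1))) := by decide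

theorem validT_code : ∀ x y : Fin 7, x.1 ≤ y.1 → validT (t! (4+7*x.1+y.1)) := by decide
theorem validT_arr : ∀ m : Fin 7, validT (t! (4+8*m.1)) := by decide
theorem validT_e : ∀ k : Fin 4, validT (t! k.1) := by decide

theorem chord_single (i : ℕ) : chord2 i i = ρ2 i := by
  simp [chord2, show i+1-i = 1 from by omega]

theorem chord_split (i j : ℕ) (h : i ≤ j) : chord2 i (j+1) = chord2 i j * ρ2 (j+1) := by
  rw [chord2, chord2, show j+1+1-i = (j+1-i)+1 from by omega, List.range'_concat]
  simp only [List.map_append, List.prod_append, List.map_cons, List.map_nil, List.prod_cons,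
    List.prod_nil, mul_one, one_mul]
  rw [show i + (j+1-i) = j+1 from by omega]

theorem φ_chord' (x : ℕ) (hx : x ≤ 6) : ∀ y, x ≤ y → y ≤ 6 →
    φ (chord2 (x+1) (y+1)) = L (t! (4+7*x+y)) := by
  intro y hxy
  induction y, hxy using Nat.le_induction with
  | base =>
    intro _
    rw [chord_single, φ_ρ (x+1) (by omega) (by omega)]
    simp only [Nat.add_sub_cancel]
    rw [show 4+8*x = 4+7*x+x from by omega]
  | succ y hxy IH =>
    intro hy
    rw [chord_split (x+1) (y+1) (by omega), map_mul, IH (by omega), φ_ρ (y+1+1) (by omega) (by omega)]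
    rw [show (y+1+1-1) = y+1 from by omega]
    have hv1 : validT (t! (4+7*x+y)) := validT_code ⟨x, by omega⟩ ⟨y, by omega⟩ hxy
    have hv2 : validT (t! (4+8*(y+1))) := validT_arr ⟨y+1, by omega⟩
    have hm : mulT (t! (4+7*x+y)) (t! (4+8*(y+1))) = some (t! (4+7*x+(y+1))) :=
      mulT_step ⟨x, by omega⟩ ⟨y, by omega⟩ hxy hy
    rw [LmulL _ _ hv1 hv2, hm]
    rfl

theorem φ_chord (i j : ℕ) (h1 : 1 ≤ i) (hij : i ≤ j) (hj : j ≤ 7) :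
    φ (chord2 i j) = L (t! (4+7*(i-1)+(j-1))) := by
  have h := φ_chord' (i-1) (by omega) (j-1) (by omega) (by omega)
  rw [show i-1+1 = i from by omega, show j-1+1 = j from by omega] at h
  exact h

theorem endV_valid : ∀ t : Vt, validT (t! (endV t.1.1)) := by decide

def colIdx (t : Vt) : Vt := ⟨t! (endV t.1.1), endV_valid t⟩

def ψ : Matrix Vt Vt (ZMod 2) →ₗ[ZMod 2] (Vt → ZMod 2) where
  toFun := fun M t => M t (colIdx t)
  map_add' := fun _ _ => rfl
  map_smul' := fun _ _ => rfl

set_option maxHeartbeats 1000000 in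
theorem ψL' : ∀ a t : Vt, L a.1 t (colIdx t) = (if t = a then 1 else 0 : ZMod 2) := by decide

theorem ψ_L (a : Vt) : ψ (L a.1) = Pi.single a 1 := by
  funext t
  rw [show ψ (L a.1) t = L a.1 t (colIdx t) from rfl, ψL' a t, Pi.single_apply]

def code : (Fin 4 ⊕ ChordIdx2) → Vt
  | .inl k => ⟨t! k.1, validT_e k⟩
  | .inr p => ⟨t! (4+7*(p.1.1-1)+(p.1.2-1)),
      validT_code ⟨p.1.1-1, by obtain ⟨h1,h2,h3⟩ := p.2; omega⟩
        ⟨p.1.2-1, by obtain ⟨h1,h2,h3⟩ := p.2; omega⟩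
        (by exact (by obtain ⟨h1,h2,h3⟩ := p.2; omega : p.1.1-1 ≤ p.1.2-1))⟩

theorem code_val_inl (k : Fin 4) : ((code (Sum.inl k)).1).1 = k.1 :=
  Nat.mod_eq_of_lt (by have := k.isLt; omega)

theorem code_val_inr (p : ChordIdx2) :
    ((code (Sum.inr p)).1).1 = 4+7*(p.1.1-1)+(p.1.2-1) :=
  Nat.mod_eq_of_lt (by obtain ⟨h1,h2,h3⟩ := p.2; omega)

theorem code_inj : Function.Injective code := by
  rintro (k|p) (l|q) h
  · have hv : ((code (Sum.inl k)).1).1 = ((code (Sum.inl l)).1).1 := by rw [h]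
    rw [code_val_inl, code_val_inl] at hv
    exact congrArg Sum.inl (Fin.ext hv)
  · have hv : ((code (Sum.inl k)).1).1 = ((code (Sum.inr q)).1).1 := by rw [h]
    rw [code_val_inl, code_val_inr] at hv
    have hk := k.isLt; obtain ⟨h1,h2,h3⟩ := q.2
    exact absurd hv (by omega)
  · have hv : ((code (Sum.inr p)).1).1 = ((code (Sum.inl l)).1).1 := by rw [h]
    rw [code_val_inr, code_val_inl] at hv
    have hl := l.isLt; obtain ⟨h1,h2,h3⟩ := p.2
    exact absurd hv (by omega)
  · have hv : ((code (Sum.inr p)).1).1 = ((code (Sum.inr q)).1).1 := by rw [h]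
    rw [code_val_inr, code_val_inr] at hv
    obtain ⟨p1,p2,p3⟩ := p.2; obtain ⟨q1,q2,q3⟩ := q.2
    have h1 : p.1.1 = q.1.1 ∧ p.1.2 = q.1.2 := by omega
    exact congrArg Sum.inr (Subtype.ext (Prod.ext h1.1 h1.2))

theorem indep2 : LinearIndependent (ZMod 2)
    (Sum.elim idem2 (fun p : ChordIdx2 => chord2 p.1.1 p.1.2)) := by
  apply LinearIndependent.of_comp (ψ ∘ₗ φ.toLinearMap)
  have hfam : (⇑(ψ ∘ₗ φ.toLinearMap)) ∘ (Sum.elim idem2 fun p : ChordIdx2 => chord2 p.1.1 p.1.2)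
      = fun s => Pi.single (code s) (1 : ZMod 2) := by
    funext s
    cases s with
    | inl k =>
      simp only [Function.comp_apply, Sum.elim_inl, LinearMap.coe_comp, AlgHom.toLinearMap_apply]
      rw [φ_idem k]
      exact ψ_L (code (Sum.inl k))
    | inr p =>
      simp only [Function.comp_apply, Sum.elim_inr, LinearMap.coe_comp, AlgHom.toLinearMap_apply]
      rw [φ_chord p.1.1 p.1.2 p.2.1 p.2.2.1 p.2.2.2]
      exact ψ_L (code (Sum.inr p))
  rw [hfam]
  have h2 := (Pi.basisFun (ZMod 2) Vt).linearIndependent.comp code code_inj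
  have h3 : (⇑(Pi.basisFun (ZMod 2) Vt) ∘ code) = fun s => Pi.single (code s) (1 : ZMod 2) := by
    funext s; simp [Pi.basisFun_apply]
  rw [h3] at h2
  exact h2

----------------- relations in B2 -----------------

theorem hEE (k : Fin 4) : idem2 k * idem2 k = idem2 k := by
  rw [idem2, ← map_mul]; exact RingQuot.mkAlgHom_rel _ (Rel2.idem k)

theorem horth (k l : Fin 4) (h : k ≠ l) : idem2 k * idem2 l = 0 := by
  rw [idem2, idem2, ← map_mul, RingQuot.mkAlgHom_rel _ (Rel2.orth k l h), map_zero]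

theorem hone : (∑ k : Fin 4, idem2 k) = 1 := by
  simp only [idem2]
  rw [← map_sum, RingQuot.mkAlgHom_rel _ Rel2.sum, map_one]

theorem hsrc (m : Fin 7) : idem2 (src2 m) * arr2 m = arr2 m := by
  rw [idem2, arr2, ← map_mul]; exact RingQuot.mkAlgHom_rel _ (Rel2.source m)

theorem htgt (m : Fin 7) : arr2 m * idem2 (tgt2 m) = arr2 m := by
  rw [idem2, arr2, ← map_mul]; exact RingQuot.mkAlgHom_rel _ (Rel2.target m)

theorem hz14 : arr2 0 * arr2 3 = 0 := by
  rw [arr2, arr2, ← map_mul, RingQuot.mkAlgHom_rel _ Rel2.rel14, map_zero]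
theorem hz47 : arr2 3 * arr2 6 = 0 := by
  rw [arr2, arr2, ← map_mul, RingQuot.mkAlgHom_rel _ Rel2.rel47, map_zero]
theorem hz21 : arr2 1 * arr2 0 = 0 := by
  rw [arr2, arr2, ← map_mul, RingQuot.mkAlgHom_rel _ Rel2.rel21, map_zero]
theorem hz32 : arr2 2 * arr2 1 = 0 := by
  rw [arr2, arr2, ← map_mul, RingQuot.mkAlgHom_rel _ Rel2.rel32, map_zero]
theorem hz65 : arr2 5 * arr2 4 = 0 := by
  rw [arr2, arr2, ← map_mul, RingQuot.mkAlgHom_rel _ Rel2.rel65, map_zero]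
theorem hz76 : arr2 6 * arr2 5 = 0 := by
  rw [arr2, arr2, ← map_mul, RingQuot.mkAlgHom_rel _ Rel2.rel76, map_zero]

theorem hEA (k : Fin 4) (m : Fin 7) (h : k ≠ src2 m) : idem2 k * arr2 m = 0 := by
  rw [← hsrc m, ← mul_assoc, horth k _ h, zero_mul]

theorem hAE (m : Fin 7) (k : Fin 4) (h : k ≠ tgt2 m) : arr2 m * idem2 k = 0 := by
  have h1 : arr2 m * idem2 k = arr2 m * (idem2 (tgt2 m) * idem2 k) := by
    rw [← mul_assoc, htgt]
  rw [h1, horth _ _ (Ne.symm h), mul_zero]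

theorem hVz (m n : Fin 7) (h : tgt2 m ≠ src2 n) : arr2 m * arr2 n = 0 := by
  have h1 : arr2 m * arr2 n = arr2 m * (idem2 (tgt2 m) * arr2 n) := by
    rw [← mul_assoc, htgt]
  rw [h1, hEA _ _ h, mul_zero]

theorem hAA (m n : Fin 7) (h : (n : ℕ) ≠ (m : ℕ) + 1) : arr2 m * arr2 n = 0 := by
  fin_cases m <;> fin_cases n <;>
    first
    | exact absurd (by decide) h
    | exact hz14
    | exact hz47
    | exact hz21
    | exact hz32
    | exact hz65
    | exact hz76
    | exact hVz _ _ (by decide)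

theorem hρρ (j k : ℕ) (hj1 : 1 ≤ j) (hj7 : j ≤ 7) (hk1 : 1 ≤ k) (hk7 : k ≤ 7)
    (h : k ≠ j + 1) : ρ2 j * ρ2 k = 0 := by
  have e1 : ρ2 j = arr2 ⟨j-1, by omega⟩ := dif_pos ⟨hj1, hj7⟩
  have e2 : ρ2 k = arr2 ⟨k-1, by omega⟩ := dif_pos ⟨hk1, hk7⟩
  rw [e1, e2]
  exact hAA _ _ (by show k-1 ≠ (j-1)+1; omega)

theorem chord_concat (i j k : ℕ) (h1 : i ≤ j) (h2 : j < k) :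
    chord2 i j * chord2 (j+1) k = chord2 i k := by
  have e : List.range' i (j+1-i) ++ List.range' (i+(j+1-i)) (k-j)
      = List.range' i ((k-j)+(j+1-i)) := by rw [Nat.add_comm (k-j)]; exact List.range'_append_1 (s := i) (m := j+1-i) (n := k-j)
  rw [show i+(j+1-i) = j+1 from by omega, show (k-j)+(j+1-i) = k+1-i from by omega] at e
  rw [chord2, chord2, chord2, ← List.prod_append, ← List.map_append,
      show k+1-(j+1) = k-j from by omega, e]

theorem chord_first (i j : ℕ) (h : i ≤ j) : chord2 i j = ρ2 i * chord2 (i+1) j := by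
  rw [chord2, chord2, show j+1-i = (j+1-(i+1))+1 from by omega, List.range'_succ]
  simp

theorem chord_last' (i j : ℕ) (h1 : 1 ≤ i) (h : i ≤ j) :
    chord2 i j = chord2 i (j-1) * ρ2 j := by
  rcases Nat.eq_or_lt_of_le h with he | hlt
  · subst he
    rw [chord_single, chord2, show (i-1)+1-i = 0 from by omega]
    simp
  · have hs := chord_split i (j-1) (by omega)
    rw [show (j-1)+1 = j from by omega] at hs
    exact hs

theorem chord_chord_zero (i j k l : ℕ) (hi : 1 ≤ i) (hij : i ≤ j) (hj : j ≤ 7)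
    (hk : 1 ≤ k) (hkl : k ≤ l) (hl : l ≤ 7) (hne : k ≠ j+1) :
    chord2 i j * chord2 k l = 0 := by
  rw [chord_last' i j hi hij, chord_first k l hkl, mul_assoc, ← mul_assoc (ρ2 j),
      hρρ j k (by omega) hj hk (by omega) hne, zero_mul, mul_zero]

theorem E_chord_eq (i j : ℕ) (hi : 1 ≤ i) (hij : i ≤ j) (hj : j ≤ 7) :
    idem2 (src2 ⟨i-1, by omega⟩) * chord2 i j = chord2 i j := by
  have e1 : ρ2 i = arr2 ⟨i-1, by omega⟩ := dif_pos ⟨hi, by omega⟩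
  rw [chord_first i j hij, e1, ← mul_assoc, hsrc]

theorem E_chord_ne (kk : Fin 4) (i j : ℕ) (hi : 1 ≤ i) (hij : i ≤ j) (hj : j ≤ 7)
    (hne : kk ≠ src2 ⟨i-1, by omega⟩) : idem2 kk * chord2 i j = 0 := by
  have e1 : ρ2 i = arr2 ⟨i-1, by omega⟩ := dif_pos ⟨hi, by omega⟩
  rw [chord_first i j hij, e1, ← mul_assoc, hEA kk _ hne, zero_mul]

theorem chord_E_eq (i j : ℕ) (hi : 1 ≤ i) (hij : i ≤ j) (hj : j ≤ 7) :
    chord2 i j * idem2 (tgt2 ⟨j-1, by omega⟩) = chord2 i j := by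
  have e1 : ρ2 j = arr2 ⟨j-1, by omega⟩ := dif_pos ⟨by omega, hj⟩
  rw [chord_last' i j hi hij, e1, mul_assoc, htgt]

theorem chord_E_ne (i j : ℕ) (kk : Fin 4) (hi : 1 ≤ i) (hij : i ≤ j) (hj : j ≤ 7)
    (hne : kk ≠ tgt2 ⟨j-1, by omega⟩) : chord2 i j * idem2 kk = 0 := by
  have e1 : ρ2 j = arr2 ⟨j-1, by omega⟩ := dif_pos ⟨by omega, hj⟩
  rw [chord_last' i j hi hij, e1, mul_assoc, hAE _ kk hne, mul_zero]

----------------- spanning -----------------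

theorem span_top2 : Submodule.span (ZMod 2)
    (Set.range (Sum.elim idem2 (fun p : ChordIdx2 => chord2 p.1.1 p.1.2))) = ⊤ := by
  set v := Sum.elim idem2 (fun p : ChordIdx2 => chord2 p.1.1 p.1.2) with hv
  set W := Submodule.span (ZMod 2) (Set.range v) with hW
  have hidem : ∀ k, idem2 k ∈ W := fun k => Submodule.subset_span ⟨Sum.inl k, rfl⟩
  have hchord : ∀ (i j : ℕ), 1 ≤ i → i ≤ j → j ≤ 7 → chord2 i j ∈ W := fun i j h1 h2 h3 =>
    Submodule.subset_span ⟨Sum.inr ⟨(i,j), h1, h2, h3⟩, rfl⟩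
  have hone' : (1 : B2) ∈ W := by rw [← hone]; exact Submodule.sum_mem _ fun k _ => hidem k
  have hpair : ∀ x ∈ Set.range v, ∀ y ∈ Set.range v, x * y ∈ W := by
    rintro _ ⟨s, rfl⟩ _ ⟨t, rfl⟩
    cases s with
    | inl k =>
      cases t with
      | inl l =>
        simp only [hv, Sum.elim_inl]
        by_cases hkl : k = l
        · subst hkl; rw [hEE]; exact hidem k
        · rw [horth k l hkl]; exact Submodule.zero_mem _
      | inr q =>
        obtain ⟨⟨i,j⟩, h1, h2, h3⟩ := q
        simp only [hv, Sum.elim_inl, Sum.elim_inr]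
        change idem2 k * chord2 i j ∈ W
        by_cases hk : k = src2 ⟨i-1, by omega⟩
        · rw [hk, E_chord_eq i j h1 h2 h3]; exact hchord i j h1 h2 h3
        · rw [E_chord_ne k i j h1 h2 h3 hk]; exact Submodule.zero_mem _
    | inr p =>
      obtain ⟨⟨i,j⟩, h1, h2, h3⟩ := p
      cases t with
      | inl l =>
        simp only [hv, Sum.elim_inl, Sum.elim_inr]
        change chord2 i j * idem2 l ∈ W
        by_cases hl : l = tgt2 ⟨j-1, by omega⟩
        · rw [hl, chord_E_eq i j h1 h2 h3]; exact hchord i j h1 h2 h3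
        · rw [chord_E_ne i j l h1 h2 h3 hl]; exact Submodule.zero_mem _
      | inr q =>
        obtain ⟨⟨k,l⟩, g1, g2, g3⟩ := q
        simp only [hv, Sum.elim_inr]
        change chord2 i j * chord2 k l ∈ W
        by_cases hc : k = j+1
        · subst hc
          rw [chord_concat i j l h2 (by omega)]
          exact hchord i l h1 (by omega) g3
        · rw [chord_chord_zero i j k l h1 h2 h3 g1 g2 g3 hc]
          exact Submodule.zero_mem _
  have hWW : W * W ≤ W := by
    rw [hW, Submodule.span_mul_span]
    refine Submodule.span_le.2 ?_
    rintro _ ⟨x, hx, y, hy, rfl⟩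
    exact hpair x hx y hy
  have hmul : ∀ x y : B2, x ∈ W → y ∈ W → x * y ∈ W := fun x y hx hy =>
    hWW (Submodule.mul_mem_mul hx hy)
  let Wa : Subalgebra (ZMod 2) B2 := Submodule.toSubalgebra W hone' hmul
  have htop : ∀ x : B2, x ∈ Wa := by
    intro x
    obtain ⟨y, rfl⟩ := RingQuot.mkAlgHom_surjective (ZMod 2) Rel2 x
    induction y using FreeAlgebra.induction with
    | grade0 r => rw [AlgHom.commutes]; exact Wa.algebraMap_mem r
    | grade1 g =>
      cases g with
      | e k => exact hidem k
      | r m =>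
        have hm7 := m.isLt
        have hc : chord2 (m.1+1) (m.1+1) = arr2 m := by
          rw [chord_single]
          have e1 : ρ2 (m.1+1) = arr2 ⟨m.1+1-1, by omega⟩ := dif_pos ⟨by omega, by omega⟩
          rw [e1]
          congr 1
        have := hchord (m.1+1) (m.1+1) (by omega) le_rfl (by omega)
        rw [hc] at this
        exact this
    | mul a b ha hb => rw [map_mul]; exact Wa.mul_mem ha hb
    | add a b ha hb => rw [map_add]; exact Wa.add_mem ha hb
  exact eq_top_iff.2 fun x _ => htop x

def chordEquiv : ChordIdx2 ≃ {q : Fin 8 × Fin 8 // 1 ≤ q.1.1 ∧ q.1.1 ≤ q.2.1 ∧ q.2.1 ≤ 7} where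
  toFun p := ⟨(⟨p.1.1, by obtain ⟨a,b,c⟩ := p.2; omega⟩, ⟨p.1.2, by obtain ⟨a,b,c⟩ := p.2; omega⟩),
      p.2⟩
  invFun q := ⟨(q.1.1.1, q.1.2.1), q.2⟩
  left_inv p := rfl
  right_inv q := rfl

instance : Fintype ChordIdx2 := Fintype.ofEquiv _ chordEquiv.symm

theorem card_chord : Fintype.card ChordIdx2 = 28 := by
  rw [Fintype.card_congr chordEquiv]
  decide


/-- the 4 idempotents together with the 28 chords form a basis of B(Z_2),
which is therefore 32-dimensional over F_2. -/
theorem stmt_0 :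
    LinearIndependent (ZMod 2)
      (Sum.elim idem2 (fun p : ChordIdx2 => chord2 p.1.1 p.1.2)) ∧
    Submodule.span (ZMod 2)
      (Set.range (Sum.elim idem2 (fun p : ChordIdx2 => chord2 p.1.1 p.1.2))) = ⊤ ∧
    Module.finrank (ZMod 2) B2 = 32 := by
  refine ⟨indep2, span_top2, ?_⟩
  have b : Module.Basis (Fin 4 ⊕ ChordIdx2) (ZMod 2) B2 :=
    Module.Basis.mk indep2 (le_of_eq span_top2.symm)
  rw [Module.finrank_eq_card_basis b, Fintype.card_sum, card_chord]
  simp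
end

section
/- The zeroth Hochschild homology HH_0(B(Z_2)) = B(Z_2)/[B(Z_2), B(Z_2)] is 4-dimensional over F_2, spanned by the classes of the four idempotents i_0, i_1, i_2, i_3. In particular, the classes of the cyclic paths ρ_1 ρ_2, ρ_2 ρ_3, ρ_5 ρ_6, ρ_6 ρ_7 all vanish in HH_0. -/
open FreeAlgebra

/-- The F_2-span of all commutators in B(Z_2). -/
noncomputable def commSpan2 : Submodule (ZMod 2) B2 :=
  Submodule.span (ZMod 2) {x : B2 | ∃ a b : B2, x = a * b - b * a}


namespace B2aux

local notation "F" => RingQuot.mkAlgHom (ZMod 2) Rel2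

lemma req {x y : FreeAlgebra (ZMod 2) Gen2} (h : Rel2 x y) : F x = F y :=
  RingQuot.mkAlgHom_rel _ h

lemma he (k : Fin 4) : idem2 k * idem2 k = idem2 k := by
  have := req (Rel2.idem k); rwa [map_mul] at this

lemma ho (k l : Fin 4) (h : k ≠ l) : idem2 k * idem2 l = 0 := by
  have := req (Rel2.orth k l h); rwa [map_mul, map_zero] at this

lemma hsum : ∑ k : Fin 4, idem2 k = 1 := by
  have := req Rel2.sum; rwa [map_sum, map_one] at this

lemma hsrc (m : Fin 7) : idem2 (src2 m) * arr2 m = arr2 m := by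
  have := req (Rel2.source m); rwa [map_mul] at this

lemma htgt (m : Fin 7) : arr2 m * idem2 (tgt2 m) = arr2 m := by
  have := req (Rel2.target m); rwa [map_mul] at this

lemma hrel {m i : Fin 7} (h : Rel2 (ι (ZMod 2) (Gen2.r m) * ι (ZMod 2) (Gen2.r i)) 0) :
    arr2 m * arr2 i = 0 := by
  have := req h; rwa [map_mul, map_zero] at this

lemma arr_idem_zero (m : Fin 7) (k : Fin 4) (h : k ≠ tgt2 m) : arr2 m * idem2 k = 0 := by
  rw [← htgt m, mul_assoc, ho _ _ (Ne.symm h), mul_zero]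

lemma idem_arr_zero (k : Fin 4) (m : Fin 7) (h : k ≠ src2 m) : idem2 k * arr2 m = 0 := by
  rw [← hsrc m, ← mul_assoc, ho _ _ h, zero_mul]

lemma horth (m i : Fin 7) (h : tgt2 m ≠ src2 i) : arr2 m * arr2 i = 0 := by
  rw [← htgt m, ← hsrc i, mul_assoc, ← mul_assoc (idem2 (tgt2 m)), ho _ _ h, zero_mul, mul_zero]

lemma arr_arr_zero (m i : Fin 7) (h : (i : ℕ) ≠ (m : ℕ) + 1) : arr2 m * arr2 i = 0 := by
  fin_cases m <;> fin_cases i <;>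
    first
      | exact absurd rfl h
      | exact hrel Rel2.rel14
      | exact hrel Rel2.rel47
      | exact hrel Rel2.rel21
      | exact hrel Rel2.rel32
      | exact hrel Rel2.rel65
      | exact hrel Rel2.rel76
      | exact horth _ _ (by decide)

end B2aux

namespace B2aux

lemma rho_eq (k : ℕ) (h1 : 1 ≤ k) (h2 : k ≤ 7) : ρ2 k = arr2 ⟨k - 1, by omega⟩ :=
  dif_pos ⟨h1, h2⟩

lemma rho_zero (k : ℕ) (h : ¬(1 ≤ k ∧ k ≤ 7)) : ρ2 k = 0 := dif_neg h

lemma rho_fin (a : Fin 7) : ρ2 ((a : ℕ) + 1) = arr2 a := by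
  rw [rho_eq _ (by omega) (by omega)]
  exact congrArg arr2 (Fin.ext (by simp))

lemma rho_rho_zero (m i : ℕ) (h : i ≠ m + 1) : ρ2 m * ρ2 i = 0 := by
  by_cases hm : 1 ≤ m ∧ m ≤ 7
  · by_cases hi : 1 ≤ i ∧ i ≤ 7
    · rw [rho_eq m hm.1 hm.2, rho_eq i hi.1 hi.2]
      exact arr_arr_zero _ _ (by simp; omega)
    · rw [rho_zero i hi, mul_zero]
  · rw [rho_zero m hm, zero_mul]

lemma chord_one (i j : ℕ) (h : j < i) : chord2 i j = 1 := by
  unfold chord2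
  have : j + 1 - i = 0 := by omega
  simp [this]

lemma chord_single (i : ℕ) : chord2 i i = ρ2 i := by
  unfold chord2
  have : i + 1 - i = 1 := by omega
  simp [this]

lemma chord_cons (i j : ℕ) (h : i ≤ j) : chord2 i j = ρ2 i * chord2 (i + 1) j := by
  unfold chord2
  have h1 : j + 1 - i = (j - i) + 1 := by omega
  have h2 : j + 1 - (i + 1) = j - i := by omega
  rw [h1, h2, List.range'_succ, List.map_cons, List.prod_cons]

lemma chord_concat (i j : ℕ) (hi : 1 ≤ i) (h : i ≤ j) :
    chord2 i j = chord2 i (j - 1) * ρ2 j := by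
  unfold chord2
  have h1 : j + 1 - i = (j - i) + 1 := by omega
  have h2 : (j - 1) + 1 - i = j - i := by omega
  rw [h1, h2, List.range'_1_concat, List.map_append, List.prod_append]
  have h3 : i + (j - i) = j := by omega
  simp [h3]

lemma chord_mul (i j k : ℕ) (h1 : i ≤ j + 1) (h2 : j ≤ k) :
    chord2 i j * chord2 (j + 1) k = chord2 i k := by
  unfold chord2
  rw [← List.prod_append, ← List.map_append]
  have h3 : j + 1 = i + (j + 1 - i) := by omega
  have h4 : (k + 1 - (j + 1)) + (j + 1 - i) = k + 1 - i := by omega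
  congr 2
  rw [← h4, Nat.add_comm (k + 1 - (j + 1)) (j + 1 - i), ← List.range'_append_1 (s := i) (m := j + 1 - i) (n := k + 1 - (j + 1)), ← h3]

end B2aux

namespace B2aux

/-- The spanning family: idempotents and chords. -/
noncomputable def pgen : Fin 4 ⊕ Fin 7 × Fin 7 → B2
  | .inl k => idem2 k
  | .inr (a, b) => chord2 ((a : ℕ) + 1) ((b : ℕ) + 1)

/-- The span of paths. -/
noncomputable def Spath : Submodule (ZMod 2) B2 :=
  Submodule.span (ZMod 2) (Set.range pgen)

lemma idem_mem (k : Fin 4) : idem2 k ∈ Spath :=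
  Submodule.subset_span ⟨.inl k, rfl⟩

lemma chord_mem' (a b : Fin 7) : chord2 ((a : ℕ) + 1) ((b : ℕ) + 1) ∈ Spath :=
  Submodule.subset_span ⟨.inr (a, b), rfl⟩

lemma one_mem_S : (1 : B2) ∈ Spath := by
  rw [← hsum]; exact Submodule.sum_mem _ fun k _ => idem_mem k

lemma chord_mem (i j : ℕ) (h1 : 1 ≤ i) (h2 : i ≤ 7) (h3 : j ≤ 7) : chord2 i j ∈ Spath := by
  rcases lt_or_ge j i with h | h
  · rw [chord_one i j h]; exact one_mem_S
  · have : chord2 i j = chord2 (((⟨i - 1, by omega⟩ : Fin 7) : ℕ) + 1)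
        (((⟨j - 1, by omega⟩ : Fin 7) : ℕ) + 1) := by
      simp only []
      congr 1 <;> omega
    rw [this]; exact chord_mem' _ _

lemma arr_eq_chord (m : Fin 7) : arr2 m = chord2 ((m : ℕ) + 1) ((m : ℕ) + 1) := by
  rw [chord_single, rho_fin]

lemma prod_mem : ∀ u v : Fin 4 ⊕ Fin 7 × Fin 7, pgen u * pgen v ∈ Spath := by
  rintro (k | ⟨a, b⟩) (l | ⟨a', b'⟩)
  · -- idem * idem
    show idem2 k * idem2 l ∈ Spath
    by_cases h : k = l
    · subst h; rw [he]; exact idem_mem k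
    · rw [ho k l h]; exact Submodule.zero_mem _
  · -- idem * chord
    show idem2 k * chord2 _ _ ∈ Spath
    rcases lt_or_ge (a' : ℕ) ((b' : ℕ) + 1) with h | h
    · rw [chord_cons _ _ h, rho_fin, ← mul_assoc]
      by_cases hk : k = src2 a'
      · subst hk; rw [hsrc, ← rho_fin, ← chord_cons _ _ h]; exact chord_mem' a' b'
      · rw [idem_arr_zero k a' hk, zero_mul]; exact Submodule.zero_mem _
    · rw [chord_one _ _ (by omega), mul_one]; exact idem_mem k
  · -- chord * idem
    show chord2 _ _ * idem2 l ∈ Spath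
    rcases le_or_gt ((a : ℕ) + 1) ((b : ℕ) + 1) with h | h
    · have hcc := chord_concat ((a:ℕ)+1) ((b:ℕ)+1) (by omega) h
      have hb : (b : ℕ) + 1 - 1 = (b : ℕ) := by omega
      rw [hb, rho_fin] at hcc
      rw [hcc, mul_assoc]
      by_cases hl : l = tgt2 b
      · subst hl; rw [htgt, ← hcc]
        exact chord_mem' a b
      · rw [arr_idem_zero b l hl, mul_zero]; exact Submodule.zero_mem _
    · rw [chord_one _ _ h, one_mul]; exact idem_mem l
  · -- chord * chord
    show chord2 ((a:ℕ)+1) ((b:ℕ)+1) * chord2 ((a':ℕ)+1) ((b':ℕ)+1) ∈ Spath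
    rcases lt_or_ge ((b : ℕ) + 1) ((a : ℕ) + 1) with h | h
    · rw [chord_one _ _ h, one_mul]; exact chord_mem' a' b'
    rcases lt_or_ge ((b' : ℕ) + 1) ((a' : ℕ) + 1) with h' | h'
    · rw [chord_one _ _ h', mul_one]; exact chord_mem' a b
    by_cases hc : (a' : ℕ) + 1 = (b : ℕ) + 2
    · have : (a' : ℕ) + 1 = ((b : ℕ) + 1) + 1 := by omega
      rw [this, chord_mul _ _ _ (by omega) (by omega)]
      exact chord_mem _ _ (by omega) (by omega) (by omega)
    · rw [chord_concat ((a:ℕ)+1) ((b:ℕ)+1) (by omega) h,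
        chord_cons ((a':ℕ)+1) ((b':ℕ)+1) h', mul_assoc,
        ← mul_assoc (ρ2 ((b:ℕ)+1)), rho_rho_zero _ _ (by omega), zero_mul, mul_zero]
      exact Submodule.zero_mem _

end B2aux

namespace B2aux

lemma Spath_mul : ∀ x y : B2, x ∈ Spath → y ∈ Spath → x * y ∈ Spath := by
  have h : Spath * Spath ≤ Spath := by
    rw [Spath, Submodule.span_mul_span]
    refine Submodule.span_le.mpr ?_
    rintro x ⟨p, ⟨u, rfl⟩, q, ⟨v, rfl⟩, rfl⟩
    exact prod_mem u v
  exact fun x y hx hy => h (Submodule.mul_mem_mul hx hy)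

lemma Spath_top : Spath = ⊤ := by
  have hadj : Algebra.adjoin (ZMod 2)
      (Set.range (⇑(RingQuot.mkAlgHom (ZMod 2) Rel2) ∘ ι (ZMod 2))) = ⊤ := by
    have := AlgHom.map_adjoin (RingQuot.mkAlgHom (ZMod 2) Rel2)
      (Set.range (ι (ZMod 2) : Gen2 → FreeAlgebra (ZMod 2) Gen2))
    rw [FreeAlgebra.adjoin_range_ι, ← Set.range_comp] at this
    rw [← this, Algebra.map_top]
    exact (AlgHom.range_eq_top _).mpr (RingQuot.mkAlgHom_surjective (ZMod 2) Rel2)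
  have hle : Algebra.adjoin (ZMod 2)
      (Set.range (⇑(RingQuot.mkAlgHom (ZMod 2) Rel2) ∘ ι (ZMod 2))) ≤
      Spath.toSubalgebra one_mem_S Spath_mul := by
    refine Algebra.adjoin_le ?_
    rintro x ⟨g, rfl⟩
    cases g with
    | e k => show idem2 k ∈ Spath; exact idem_mem k
    | r m => show arr2 m ∈ Spath
             rw [arr_eq_chord]; exact chord_mem' m m
  rw [eq_top_iff]
  intro x _
  exact hle (hadj ▸ Algebra.mem_top)

lemma comm_mem (x y : B2) : x * y - y * x ∈ commSpan2 :=
  Submodule.subset_span ⟨x, y, rfl⟩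

/-- chords of consecutive arrows lie in the commutator span when reversed product is 0,
and general chords with distinct endpoints are commutators. -/
lemma chord_absorb_left (a b : Fin 7) (h : (a : ℕ) ≤ (b : ℕ)) :
    idem2 (src2 a) * chord2 ((a:ℕ)+1) ((b:ℕ)+1) = chord2 ((a:ℕ)+1) ((b:ℕ)+1) := by
  rw [chord_cons _ _ (by omega), rho_fin, ← mul_assoc, hsrc]

lemma chord_absorb_right (a b : Fin 7) (h : (a : ℕ) ≤ (b : ℕ)) :
    chord2 ((a:ℕ)+1) ((b:ℕ)+1) * idem2 (tgt2 b) = chord2 ((a:ℕ)+1) ((b:ℕ)+1) := by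
  have hcc := chord_concat ((a:ℕ)+1) ((b:ℕ)+1) (by omega) (by omega)
  rw [Nat.add_sub_cancel, rho_fin] at hcc
  rw [hcc, mul_assoc, htgt]

lemma chord_noncyc_mem (a b : Fin 7) (h : (a : ℕ) ≤ (b : ℕ)) (hne : src2 a ≠ tgt2 b) :
    chord2 ((a:ℕ)+1) ((b:ℕ)+1) ∈ commSpan2 := by
  have h0 : chord2 ((a:ℕ)+1) ((b:ℕ)+1) * idem2 (src2 a) = 0 := by
    rw [← chord_absorb_right a b h, mul_assoc, ho _ _ (Ne.symm hne), mul_zero]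
  have : chord2 ((a:ℕ)+1) ((b:ℕ)+1) =
      idem2 (src2 a) * chord2 ((a:ℕ)+1) ((b:ℕ)+1) -
      chord2 ((a:ℕ)+1) ((b:ℕ)+1) * idem2 (src2 a) := by
    rw [chord_absorb_left a b h, h0, sub_zero]
  rw [this]
  exact comm_mem _ _

lemma chord_cyc_mem (m : ℕ) (_h1 : 1 ≤ m) : chord2 m (m + 1) ∈ commSpan2 := by
  have hc : chord2 m (m+1) = ρ2 m * ρ2 (m+1) := by
    rw [chord_cons _ _ (by omega), chord_single]
  have h0 : ρ2 (m+1) * ρ2 m = 0 := rho_rho_zero _ _ (by omega)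
  have : chord2 m (m+1) = ρ2 m * ρ2 (m+1) - ρ2 (m+1) * ρ2 m := by
    rw [h0, sub_zero, hc]
  rw [this]
  exact comm_mem _ _

lemma T_top :
    Submodule.span (ZMod 2) (Set.range idem2) ⊔ commSpan2 = ⊤ := by
  rw [eq_top_iff, ← Spath_top]
  refine Submodule.span_le.mpr ?_
  rintro x ⟨u, rfl⟩
  cases u with
  | inl k => exact Submodule.mem_sup_left (Submodule.subset_span ⟨k, rfl⟩)
  | inr ab =>
    obtain ⟨a, b⟩ := ab
    show chord2 ((a:ℕ)+1) ((b:ℕ)+1) ∈ _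
    rcases lt_or_ge (b : ℕ) (a : ℕ) with h | h
    · rw [chord_one _ _ (by omega)]
      rw [← hsum]
      exact Submodule.mem_sup_left
        (Submodule.sum_mem _ fun k _ => Submodule.subset_span ⟨k, rfl⟩)
    · by_cases hc : src2 a = tgt2 b
      · have hb : (b : ℕ) = (a : ℕ) + 1 := by
          have : ∀ a b : Fin 7, (a : ℕ) ≤ (b : ℕ) → src2 a = tgt2 b →
              (b : ℕ) = (a : ℕ) + 1 := by decide
          exact this a b h hc
        have : chord2 ((a:ℕ)+1) ((b:ℕ)+1) = chord2 ((a:ℕ)+1) (((a:ℕ)+1) + 1) := by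
          rw [hb]
        rw [this]
        exact Submodule.mem_sup_right (chord_cyc_mem ((a:ℕ)+1) (by omega))
      · exact Submodule.mem_sup_right (chord_noncyc_mem a b h hc)

end B2aux

namespace B2aux

noncomputable def gmap : Gen2 → (Fin 4 → ZMod 2)
  | .e k => Pi.single k 1
  | .r _ => 0

lemma gmap_rel : ∀ ⦃x y : FreeAlgebra (ZMod 2) Gen2⦄, Rel2 x y →
    FreeAlgebra.lift (ZMod 2) gmap x = FreeAlgebra.lift (ZMod 2) gmap y := by
  intro x y h
  induction h with
  | idem k =>
    simp only [map_mul, FreeAlgebra.lift_ι_apply, gmap]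
    funext j
    by_cases hj : j = k <;> simp [Pi.single_apply, hj]
  | orth k l hkl =>
    simp only [map_mul, FreeAlgebra.lift_ι_apply, gmap, map_zero]
    funext j
    by_cases hj : j = k <;> simp [Pi.single_apply, hj, Ne.symm, hkl]
  | sum =>
    simp only [map_sum, FreeAlgebra.lift_ι_apply, gmap, map_one]
    funext j
    simp [Finset.sum_apply, Pi.single_apply]
  | source m => simp [map_mul, FreeAlgebra.lift_ι_apply, gmap]
  | target m => simp [map_mul, FreeAlgebra.lift_ι_apply, gmap]
  | rel14 => simp [map_mul, FreeAlgebra.lift_ι_apply, gmap]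
  | rel47 => simp [map_mul, FreeAlgebra.lift_ι_apply, gmap]
  | rel21 => simp [map_mul, FreeAlgebra.lift_ι_apply, gmap]
  | rel32 => simp [map_mul, FreeAlgebra.lift_ι_apply, gmap]
  | rel65 => simp [map_mul, FreeAlgebra.lift_ι_apply, gmap]
  | rel76 => simp [map_mul, FreeAlgebra.lift_ι_apply, gmap]

noncomputable def φ : B2 →ₐ[ZMod 2] (Fin 4 → ZMod 2) :=
  RingQuot.liftAlgHom (ZMod 2) ⟨FreeAlgebra.lift (ZMod 2) gmap, gmap_rel⟩

lemma φ_idem (k : Fin 4) : φ (idem2 k) = Pi.single k 1 := by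
  rw [idem2, φ, RingQuot.liftAlgHom_mkAlgHom_apply]
  simp [FreeAlgebra.lift_ι_apply, gmap]

lemma ker_φ : commSpan2 ≤ LinearMap.ker (φ.toLinearMap) := by
  refine Submodule.span_le.mpr ?_
  rintro x ⟨a, b, rfl⟩
  simp only [SetLike.mem_coe, LinearMap.mem_ker, AlgHom.toLinearMap_apply, map_sub, map_mul]
  rw [mul_comm]
  exact sub_self _

noncomputable def φbar : (B2 ⧸ commSpan2) →ₗ[ZMod 2] (Fin 4 → ZMod 2) :=
  Submodule.liftQ commSpan2 φ.toLinearMap ker_φ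

lemma φbar_surj : Function.Surjective φbar := by
  intro c
  refine ⟨commSpan2.mkQ (∑ k : Fin 4, c k • idem2 k), ?_⟩
  rw [φbar]
  rw [Submodule.mkQ_apply, Submodule.liftQ_apply]
  simp only [AlgHom.toLinearMap_apply, map_sum, map_smul, φ_idem]
  funext j
  simp [Finset.sum_apply, Pi.single_apply]

end B2aux

namespace B2aux

lemma span_idem_top :
    Submodule.span (ZMod 2) (Set.range (fun k : Fin 4 => commSpan2.mkQ (idem2 k))) = ⊤ := by
  have : Set.range (fun k : Fin 4 => commSpan2.mkQ (idem2 k)) =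
      commSpan2.mkQ '' (Set.range idem2) := by
    rw [← Set.range_comp]; rfl
  rw [this, ← Submodule.map_span, eq_top_iff]
  intro x _
  obtain ⟨y, rfl⟩ := Submodule.mkQ_surjective commSpan2 x
  have hy : y ∈ Submodule.span (ZMod 2) (Set.range idem2) ⊔ commSpan2 := by
    rw [T_top]; trivial
  rw [Submodule.mem_sup] at hy
  obtain ⟨s, hs, t, ht, rfl⟩ := hy
  rw [map_add]
  have : commSpan2.mkQ t = 0 := by
    rwa [Submodule.mkQ_apply, Submodule.Quotient.mk_eq_zero]
  rw [this, add_zero]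
  exact Submodule.mem_map_of_mem hs

lemma finrank_eq : Module.finrank (ZMod 2) (B2 ⧸ commSpan2) = 4 := by
  have hup : Module.finrank (ZMod 2) (B2 ⧸ commSpan2) ≤ 4 := by
    have := finrank_le_of_span_eq_top span_idem_top
    simpa using this
  have hfin : Module.Finite (ZMod 2) (B2 ⧸ commSpan2) :=
    ⟨Submodule.fg_def.mpr ⟨_, Set.finite_range _, span_idem_top⟩⟩
  have hlow : 4 ≤ Module.finrank (ZMod 2) (B2 ⧸ commSpan2) := by
    have h1 := LinearMap.finrank_range_le φbar
    rw [LinearMap.range_eq_top.mpr φbar_surj, finrank_top] at h1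
    simpa [Module.finrank_pi] using h1
  omega

lemma cyc_zero (m : ℕ) (h1 : 1 ≤ m) : commSpan2.mkQ (ρ2 m * ρ2 (m + 1)) = 0 := by
  rw [Submodule.mkQ_apply, Submodule.Quotient.mk_eq_zero]
  have := chord_cyc_mem m h1
  rwa [chord_cons _ _ (by omega), chord_single] at this

end B2aux

/-- HH_0(B(Z_2)) = B(Z_2)/[B(Z_2),B(Z_2)] is 4-dimensional over F_2,
spanned by the classes of the four idempotents; the classes of the cyclic paths
rho_1 rho_2, rho_2 rho_3, rho_5 rho_6, rho_6 rho_7 vanish. -/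
theorem stmt_6 :
    Module.finrank (ZMod 2) (B2 ⧸ commSpan2) = 4 ∧
    Submodule.span (ZMod 2) (Set.range (fun k : Fin 4 => commSpan2.mkQ (idem2 k))) = ⊤ ∧
    commSpan2.mkQ (ρ2 1 * ρ2 2) = 0 ∧ commSpan2.mkQ (ρ2 2 * ρ2 3) = 0 ∧
    commSpan2.mkQ (ρ2 5 * ρ2 6) = 0 ∧ commSpan2.mkQ (ρ2 6 * ρ2 7) = 0 := by
  refine ⟨B2aux.finrank_eq, B2aux.span_idem_top, ?_, ?_, ?_, ?_⟩
  · exact B2aux.cyc_zero 1 (by norm_num)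
  · exact B2aux.cyc_zero 2 (by norm_num)
  · exact B2aux.cyc_zero 5 (by norm_num)
  · exact B2aux.cyc_zero 6 (by norm_num)
end
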